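/- Assume the Setup. Let L ∈ A satisfy condition (2) and let U ⊆ M be a k-subspace satisfying condition (1) for L with witness s ∈ S. Set Q := {q ∈ R : q·U ⊆ U}. Then: (i) there is a smallest N ≥ 0 with ad_{L,L₀}^{N+1}(s) = 0, and S̄ := ad_{L,L₀}^{N}(s) is nonzero and satisfies L·S̄ = S̄·L₀; (ii) for every nonzero q ∈ Q there exist a smallest N_q ≥ 0 with ad_{L}^{N_q+1}(q) = 0 and a smallest N_{q,0} ≥ 0 with ad_{L₀}^{N_{q,0}+1}(q) = 0, and N_q = N_{q,0}; (iii) for every nonzero q ∈ Q, ad_{L}^{N_q}(q)·S̄ = S̄·ad_{L₀}^{N_q}(q); (iv) for all nonzero q, q′ ∈ Q, the elements ad_{L}^{N_q}(q) and ad_{L}^{N_{q′}}(q′) commute, and the elements ad_{L₀}^{N_{q,0}}(q) and ad_{L₀}^{N_{q′,0}}(q′) commute. -/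
import Mathlib


/-- `adOp a b x = a*x - x*b`, the operator `ad_{a,b}`. -/
def adOp {A : Type*} [Ring A] (a b : A) : A → A := fun x => a * x - x * b

/-- The ad-nilpotency degree of `b` with respect to `L₀`:
the smallest `n` with `ad_{L₀}^[n+1] b = 0`. -/
noncomputable def degAd {A : Type*} [Ring A] (L₀ b : A) : ℕ :=
  sInf {n : ℕ | (adOp L₀ L₀)^[n + 1] b = 0}

section Aux
variable {A : Type*} [Ring A]

lemma adOp_zero (a b : A) : adOp a b 0 = 0 := by simp [adOp]

lemma adOp_iterate_zero (a b : A) (n : ℕ) : (adOp a b)^[n] 0 = 0 :=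
  Function.iterate_fixed (adOp_zero a b) n

lemma iterate_eventually {f : A → A} (hf : f 0 = 0) {x : A} {m n : ℕ}
    (hm : f^[m] x = 0) (h : m ≤ n) : f^[n] x = 0 := by
  obtain ⟨l, rfl⟩ := Nat.exists_eq_add_of_le h
  rw [add_comm, Function.iterate_add_apply, hm, Function.iterate_fixed hf]

lemma sInf_iter_ne {f : A → A} {x : A} (hx : x ≠ 0) :
    f^[sInf {n | f^[n + 1] x = 0}] x ≠ 0 := by
  cases h : sInf {n | f^[n + 1] x = 0} with
  | zero => simpa
  | succ m =>
    intro hzero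
    have hmem : m ∈ {n | f^[n + 1] x = 0} := hzero
    have := Nat.sInf_le hmem
    omega

lemma adOp_add (a b x y : A) : adOp a b (x + y) = adOp a b x + adOp a b y := by
  simp only [adOp]; noncomm_ring

lemma adOp_neg (a b x : A) : adOp a b (-x) = -adOp a b x := by
  simp only [adOp]; noncomm_ring

lemma adOp_iterate_add (a b : A) (n : ℕ) (x y : A) :
    (adOp a b)^[n] (x + y) = (adOp a b)^[n] x + (adOp a b)^[n] y := by
  induction n generalizing x y with
  | zero => simp
  | succ n ih => simp [Function.iterate_succ_apply, adOp_add, ih]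

lemma adOp_iterate_neg (a b : A) (n : ℕ) (x : A) :
    (adOp a b)^[n] (-x) = -(adOp a b)^[n] x := by
  induction n generalizing x with
  | zero => simp
  | succ n ih => simp [Function.iterate_succ_apply, adOp_neg, ih]

lemma adOp_mul' (a b c x y : A) :
    adOp a c (x * y) = adOp a b x * y + x * adOp b c y := by
  simp only [adOp]; noncomm_ring

lemma adOp_sum {ι : Type*} (a b : A) (t : Finset ι) (g : ι → A) :
    adOp a b (∑ i ∈ t, g i) = ∑ i ∈ t, adOp a b (g i) :=
  map_sum (AddMonoidHom.mk' (adOp a b) (adOp_add a b)) g t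

lemma adOp_iterate_sum {ι : Type*} (a b : A) (n : ℕ) (t : Finset ι) (g : ι → A) :
    (adOp a b)^[n] (∑ i ∈ t, g i) = ∑ i ∈ t, (adOp a b)^[n] (g i) := by
  induction n generalizing g with
  | zero => simp
  | succ n ih => rw [Function.iterate_succ_apply, adOp_sum]; exact ih _

lemma adOp_sub (a b x y : A) : adOp a b (x - y) = adOp a b x - adOp a b y := by
  simp only [adOp]; noncomm_ring

lemma adOp_iterate_sub (a b : A) (n : ℕ) (x y : A) :
    (adOp a b)^[n] (x - y) = (adOp a b)^[n] x - (adOp a b)^[n] y := by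
  simp only [sub_eq_add_neg, adOp_iterate_add, adOp_iterate_neg]

lemma nsmul_cancel [IsDomain A] [CharZero A] {c : ℕ} (hc : c ≠ 0) {x y : A}
    (h : c • x = c • y) : x = y := by
  rw [nsmul_eq_mul, nsmul_eq_mul] at h
  exact mul_left_cancel₀ (Nat.cast_ne_zero.mpr hc) h

lemma adOp_leibniz' (a b c : A) (n : ℕ) (x y : A) :
    (adOp a c)^[n] (x * y) =
      ∑ i ∈ Finset.range (n + 1),
        (n.choose i) • ((adOp a b)^[i] x * (adOp b c)^[n - i] y) := by
  induction n generalizing x y with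
  | zero => simp
  | succ n ih =>
    rw [Function.iterate_succ_apply, adOp_mul' a b c, adOp_iterate_add, ih, ih]
    have e2 : ∀ (i : ℕ) (z : A), (adOp a b)^[i] (adOp a b z) = (adOp a b)^[i + 1] z :=
      fun i z => (Function.iterate_succ_apply (adOp a b) i z).symm
    have e3 : ∀ (i : ℕ) (z : A), (adOp b c)^[i] (adOp b c z) = (adOp b c)^[i + 1] z :=
      fun i z => (Function.iterate_succ_apply (adOp b c) i z).symm
    simp only [e2, e3]
    rw [Finset.sum_range_succ'
      (fun j => ((n + 1).choose j) • ((adOp a b)^[j] x * (adOp b c)^[n + 1 - j] y)) (n + 1)]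
    have hsplit : ∀ i ∈ Finset.range (n + 1),
        ((n + 1).choose (i + 1)) • ((adOp a b)^[i + 1] x * (adOp b c)^[n + 1 - (i + 1)] y)
        = (n.choose i) • ((adOp a b)^[i + 1] x * (adOp b c)^[n - i] y)
          + (n.choose (i + 1)) • ((adOp a b)^[i + 1] x * (adOp b c)^[n - i] y) := by
      intro i hi
      have : n + 1 - (i + 1) = n - i := by omega
      rw [this, Nat.choose_succ_succ, add_smul]
    rw [Finset.sum_congr rfl hsplit, Finset.sum_add_distrib]
    have hlast : ∑ i ∈ Finset.range (n + 1),
          (n.choose i) • ((adOp a b)^[i] x * (adOp b c)^[n - i + 1] y)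
        = (∑ i ∈ Finset.range (n + 1),
            (n.choose (i + 1)) • ((adOp a b)^[i + 1] x * (adOp b c)^[n - i] y))
          + ((n + 1).choose 0) • ((adOp a b)^[0] x * (adOp b c)^[n + 1 - 0] y) := by
      rw [Finset.sum_range_succ'
        (fun i => (n.choose i) • ((adOp a b)^[i] x * (adOp b c)^[n - i + 1] y)) n]
      rw [Finset.sum_range_succ
        (fun i => (n.choose (i + 1)) • ((adOp a b)^[i + 1] x * (adOp b c)^[n - i] y)) n]
      rw [Nat.choose_succ_self, zero_smul, add_zero]
      congr 1
      · refine Finset.sum_congr rfl fun i hi => ?_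
        rw [Finset.mem_range] at hi
        have : n - (i + 1) + 1 = n - i := by omega
        rw [this]
      · simp
    rw [hlast, ← add_assoc]

lemma adOp_leibniz_vanish' (a b c : A) {x y : A} {m n : ℕ}
    (hx : (adOp a b)^[m + 1] x = 0) (hy : (adOp b c)^[n + 1] y = 0) :
    (adOp a c)^[m + n + 1] (x * y) = 0 := by
  rw [adOp_leibniz' a b c]
  refine Finset.sum_eq_zero fun i hi => ?_
  rw [Finset.mem_range] at hi
  rcases le_or_gt i m with h | h
  · have : (adOp b c)^[m + n + 1 - i] y = 0 :=
      iterate_eventually (adOp_zero b c) hy (by omega)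
    rw [this, mul_zero, smul_zero]
  · have : (adOp a b)^[i] x = 0 :=
      iterate_eventually (adOp_zero a b) hx (by omega)
    rw [this, zero_mul, smul_zero]

lemma adOp_leibniz_top' (a b c : A) {x y : A} {m n : ℕ}
    (hx : (adOp a b)^[m + 1] x = 0) (hy : (adOp b c)^[n + 1] y = 0) :
    (adOp a c)^[m + n] (x * y)
      = ((m + n).choose m) • ((adOp a b)^[m] x * (adOp b c)^[n] y) := by
  rw [adOp_leibniz' a b c]
  rw [Finset.sum_eq_single m]
  · have h : m + n - m = n := by omega
    rw [h]
  · intro i hi him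
    rw [Finset.mem_range] at hi
    rcases lt_or_gt_of_ne him with h | h
    · have : (adOp b c)^[m + n - i] y = 0 :=
        iterate_eventually (adOp_zero b c) hy (by omega)
      rw [this, mul_zero, smul_zero]
    · have : (adOp a b)^[i] x = 0 :=
        iterate_eventually (adOp_zero a b) hx (by omega)
      rw [this, zero_mul, smul_zero]
  · intro h
    exact absurd (Finset.mem_range.mpr (by omega)) h

lemma adOp_leibniz_vanish (a : A) {x y : A} {m n : ℕ}
    (hx : (adOp a a)^[m + 1] x = 0) (hy : (adOp a a)^[n + 1] y = 0) :
    (adOp a a)^[m + n + 1] (x * y) = 0 :=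
  adOp_leibniz_vanish' a a a hx hy

lemma adOp_leibniz_top (a : A) {x y : A} {m n : ℕ}
    (hx : (adOp a a)^[m + 1] x = 0) (hy : (adOp a a)^[n + 1] y = 0) :
    (adOp a a)^[m + n] (x * y)
      = ((m + n).choose m) • ((adOp a a)^[m] x * (adOp a a)^[n] y) :=
  adOp_leibniz_top' a a a hx hy

lemma degAd_def (L₀ x : A) :
    degAd L₀ x = sInf {n : ℕ | (adOp L₀ L₀)^[n + 1] x = 0} := rfl

lemma degAd_one (L₀ : A) : degAd L₀ (1 : A) = 0 := by
  have h : (adOp L₀ L₀)^[0 + 1] (1 : A) = 0 := by simp [adOp]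
  exact Nat.le_zero.mp (Nat.sInf_le h)

lemma degAd_neg (L₀ x : A) : degAd L₀ (-x) = degAd L₀ x := by
  unfold degAd
  congr 1
  ext n
  simp [adOp_iterate_neg]

lemma degAd_adOp_le {L₀ b : A} (hb : adOp L₀ L₀ b ≠ 0)
    (hbm : (adOp L₀ L₀)^[degAd L₀ b + 1] b = 0) :
    degAd L₀ (adOp L₀ L₀ b) + 1 ≤ degAd L₀ b := by
  cases hd : degAd L₀ b with
  | zero =>
    rw [hd] at hbm
    simp only [zero_add, Function.iterate_one] at hbm
    exact absurd hbm hb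
  | succ m =>
    rw [hd] at hbm
    have h2 : (adOp L₀ L₀)^[m + 1] (adOp L₀ L₀ b) = 0 := by
      rw [← Function.iterate_succ_apply]
      exact hbm
    have h2' : m ∈ {n : ℕ | (adOp L₀ L₀)^[n + 1] (adOp L₀ L₀ b) = 0} := h2
    have h3 : degAd L₀ (adOp L₀ L₀ b) ≤ m := Nat.sInf_le h2'
    omega

lemma degAd_mul {A : Type*} [Ring A] [IsDomain A] [CharZero A] {L₀ x y : A}
    (hx : x ≠ 0) (hy : y ≠ 0)
    (hxm : (adOp L₀ L₀)^[degAd L₀ x + 1] x = 0)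
    (hym : (adOp L₀ L₀)^[degAd L₀ y + 1] y = 0) :
    degAd L₀ (x * y) = degAd L₀ x + degAd L₀ y := by
  set m := degAd L₀ x
  set n := degAd L₀ y
  have htop := adOp_leibniz_top L₀ hxm hym
  have hxx : (adOp L₀ L₀)^[m] x ≠ 0 := sInf_iter_ne hx
  have hyy : (adOp L₀ L₀)^[n] y ≠ 0 := sInf_iter_ne hy
  have hne0 : (adOp L₀ L₀)^[m + n] (x * y) ≠ 0 := by
    rw [htop, nsmul_eq_mul]
    exact mul_ne_zero
      (Nat.cast_ne_zero.mpr (Nat.choose_pos (Nat.le_add_right m n)).ne')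
      (mul_ne_zero hxx hyy)
  have hvan : (adOp L₀ L₀)^[m + n + 1] (x * y) = 0 := adOp_leibniz_vanish L₀ hxm hym
  have hle : degAd L₀ (x * y) ≤ m + n := Nat.sInf_le hvan
  have hge : ¬ degAd L₀ (x * y) + 1 ≤ m + n := by
    intro h
    have hmem : (adOp L₀ L₀)^[degAd L₀ (x * y) + 1] (x * y) = 0 :=
      Nat.sInf_mem (⟨m + n, hvan⟩ :
        Set.Nonempty {n' : ℕ | (adOp L₀ L₀)^[n' + 1] (x * y) = 0})
    exact hne0 (iterate_eventually (adOp_zero L₀ L₀) hmem h)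
  omega

lemma exists_nu {k A : Type*} [CommRing k] [Ring A] [IsDomain A] [CharZero A]
    [Algebra k A]
    (B R : Subalgebra k A) (hRB : R ≤ B)
    (hRcomm : ∀ x ∈ R, ∀ y ∈ R, x * y = y * x)
    (S : Set A) (hSR : S ⊆ (R : Set A)) (hS0 : (0 : A) ∉ S) (hS1 : (1 : A) ∈ S)
    (hSmul : ∀ s ∈ S, ∀ t ∈ S, s * t ∈ S)
    (hleft : ∀ a : A, ∃ s ∈ S, s * a ∈ B)
    (hright : ∀ a : A, ∃ s ∈ S, a * s ∈ B)
    (L₀ : A) (hL₀ : L₀ ∈ B)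
    (hnil : ∀ b ∈ B, ∃ n : ℕ, (adOp L₀ L₀)^[n] b = 0) :
    ∃ ν : A → ℤ,
      (∀ x u v : A, x ≠ 0 → u ∈ S → v ∈ S → u * x * v ∈ B →
        ν x = (degAd L₀ (u * x * v) : ℤ) - degAd L₀ u - degAd L₀ v) ∧
      (∀ x y : A, x ≠ 0 → y ≠ 0 → ν (x * y) = ν x + ν y) ∧
      (∀ x y : A, x ≠ 0 → y ≠ 0 → x + y ≠ 0 → ν (x + y) ≤ max (ν x) (ν y)) ∧
      (∀ x : A, x ≠ 0 → ν (-x) = ν x) ∧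
      (∀ x : A, adOp L₀ L₀ x ≠ 0 → ν (adOp L₀ L₀ x) + 1 ≤ ν x) := by
  classical
  have hSne : ∀ u ∈ S, u ≠ (0 : A) := fun u hu h => hS0 (h ▸ hu)
  have hSB : ∀ u ∈ S, u ∈ B := fun u hu => hRB (hSR hu)
  have hBne : ∀ b : A, b ∈ B → (adOp L₀ L₀)^[degAd L₀ b + 1] b = 0 := by
    intro b hb
    obtain ⟨n, hn⟩ := hnil b hb
    have h1 : (adOp L₀ L₀)^[n + 1] b = 0 :=
      iterate_eventually (adOp_zero L₀ L₀) hn (Nat.le_succ n)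
    exact Nat.sInf_mem (⟨n, h1⟩ : Set.Nonempty {m : ℕ | (adOp L₀ L₀)^[m + 1] b = 0})
  have hdegmul : ∀ x y : A, x ∈ B → y ∈ B → x ≠ 0 → y ≠ 0 →
      degAd L₀ (x * y) = degAd L₀ x + degAd L₀ y := fun x y hx hy hx0 hy0 =>
    degAd_mul hx0 hy0 (hBne x hx) (hBne y hy)
  -- transport lemma for the valuation
  have htrans : ∀ x u v u' v' : A, x ≠ 0 → u ∈ S → v ∈ S → u' ∈ S → v' ∈ S →
      u * x * v ∈ B → u' * x * v' ∈ B →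
      degAd L₀ (u * x * v) + degAd L₀ u' + degAd L₀ v'
        = degAd L₀ (u' * x * v') + degAd L₀ u + degAd L₀ v := by
    intro x u v u' v' hx hu hv hu' hv' hB1 hB2
    have hcomm1 : u' * u = u * u' := hRcomm _ (hSR hu') _ (hSR hu)
    have hcomm2 : v * v' = v' * v := hRcomm _ (hSR hv) _ (hSR hv')
    have hE : u' * (u * x * v) * v' = u * (u' * x * v') * v := by
      calc u' * (u * x * v) * v' = (u' * u) * (x * (v * v')) := by
            simp only [mul_assoc]
        _ = (u * u') * (x * (v' * v)) := by rw [hcomm1, hcomm2]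
        _ = u * (u' * x * v') * v := by simp only [mul_assoc]
    have hne1 : u * x * v ≠ 0 := mul_ne_zero (mul_ne_zero (hSne u hu) hx) (hSne v hv)
    have hne2 : u' * x * v' ≠ 0 := mul_ne_zero (mul_ne_zero (hSne u' hu') hx) (hSne v' hv')
    have h1 : degAd L₀ (u' * (u * x * v) * v')
        = degAd L₀ u' + degAd L₀ (u * x * v) + degAd L₀ v' := by
      rw [hdegmul _ _ (B.mul_mem (hSB u' hu') hB1) (hSB v' hv')
        (mul_ne_zero (hSne u' hu') hne1) (hSne v' hv'),
        hdegmul _ _ (hSB u' hu') hB1 (hSne u' hu') hne1]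
    have h2 : degAd L₀ (u * (u' * x * v') * v)
        = degAd L₀ u + degAd L₀ (u' * x * v') + degAd L₀ v := by
      rw [hdegmul _ _ (B.mul_mem (hSB u hu) hB2) (hSB v hv)
        (mul_ne_zero (hSne u hu) hne2) (hSne v hv),
        hdegmul _ _ (hSB u hu) hB2 (hSne u hu) hne2]
    rw [hE, h2] at h1
    omega
  choose w hwS hwB using hleft
  set ν : A → ℤ := fun x => (degAd L₀ (w x * x) : ℤ) - degAd L₀ (w x) with hν
  have hspec : ∀ x u v : A, x ≠ 0 → u ∈ S → v ∈ S → u * x * v ∈ B →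
      ν x = (degAd L₀ (u * x * v) : ℤ) - degAd L₀ u - degAd L₀ v := by
    intro x u v hx hu hv hBm
    have ht := htrans x (w x) 1 u v hx (hwS x) hS1 hu hv
      (by rw [mul_one]; exact hwB x) hBm
    rw [mul_one, degAd_one] at ht
    simp only [hν]
    omega
  have hmul : ∀ x y : A, x ≠ 0 → y ≠ 0 → ν (x * y) = ν x + ν y := by
    intro x y hx hy
    have hu : w x ∈ S := hwS x
    have hub : w x * x ∈ B := hwB x
    set u := w x with hu_def
    obtain ⟨v, hv, hvb⟩ := hright y
    have hassoc : u * (x * y) * v = (u * x) * (y * v) := by simp only [mul_assoc]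
    have hxy : u * (x * y) * v ∈ B := by rw [hassoc]; exact B.mul_mem hub hvb
    have e0 := hspec (x * y) u v (mul_ne_zero hx hy) hu hv hxy
    have e1 := hspec x u 1 hx hu hS1 (by rw [mul_one]; exact hub)
    have e2 := hspec y 1 v hy hS1 hv (by rw [one_mul]; exact hvb)
    rw [mul_one, degAd_one] at e1
    rw [one_mul, degAd_one] at e2
    rw [hassoc, hdegmul _ _ hub hvb (mul_ne_zero (hSne u hu) hx)
      (mul_ne_zero hy (hSne v hv))] at e0
    omega
  have hneg : ∀ x : A, x ≠ 0 → ν (-x) = ν x := by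
    intro x hx
    have hub := hwB x
    have hu := hwS x
    have e1 := hspec x (w x) 1 hx hu hS1 (by rw [mul_one]; exact hub)
    have e2 := hspec (-x) (w x) 1 (neg_ne_zero.mpr hx) hu hS1
      (by rw [mul_one, mul_neg]; exact B.neg_mem hub)
    rw [mul_one] at e1
    rw [mul_one, mul_neg, degAd_neg] at e2
    omega
  have hadd : ∀ x y : A, x ≠ 0 → y ≠ 0 → x + y ≠ 0 → ν (x + y) ≤ max (ν x) (ν y) := by
    intro x y hx hy hxy
    have hu : w x ∈ S := hwS x
    have hub : w x * x ∈ B := hwB x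
    set u := w x with hu_def
    have hu' : w y ∈ S := hwS y
    have hub' : w y * y ∈ B := hwB y
    set u' := w y with hu'_def
    have hWS : u' * u ∈ S := hSmul u' hu' u hu
    have hwx : (u' * u) * x ∈ B := by
      rw [mul_assoc]; exact B.mul_mem (hSB u' hu') hub
    have hwy : (u' * u) * y ∈ B := by
      rw [hRcomm u' (hSR hu') u (hSR hu), mul_assoc]
      exact B.mul_mem (hSB u hu) hub'
    have hwxy : (u' * u) * (x + y) ∈ B := by
      rw [mul_add]; exact B.add_mem hwx hwy
    have e0 := hspec (x + y) (u' * u) 1 hxy hWS hS1 (by rw [mul_one]; exact hwxy)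
    have e1 := hspec x (u' * u) 1 hx hWS hS1 (by rw [mul_one]; exact hwx)
    have e2 := hspec y (u' * u) 1 hy hWS hS1 (by rw [mul_one]; exact hwy)
    rw [mul_one] at e0 e1 e2
    have hWne : u' * u ≠ 0 := hSne _ hWS
    -- degree of a sum is at most the max of the degrees
    set dmax := max (degAd L₀ ((u' * u) * x)) (degAd L₀ ((u' * u) * y)) with hdmax
    have hv1 : (adOp L₀ L₀)^[dmax + 1] ((u' * u) * x) = 0 :=
      iterate_eventually (adOp_zero L₀ L₀) (hBne _ hwx)
        (by have := le_max_left (degAd L₀ ((u' * u) * x)) (degAd L₀ ((u' * u) * y)); omega)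
    have hv2 : (adOp L₀ L₀)^[dmax + 1] ((u' * u) * y) = 0 :=
      iterate_eventually (adOp_zero L₀ L₀) (hBne _ hwy)
        (by have := le_max_right (degAd L₀ ((u' * u) * x)) (degAd L₀ ((u' * u) * y)); omega)
    have hv : (adOp L₀ L₀)^[dmax + 1] ((u' * u) * (x + y)) = 0 := by
      rw [mul_add, adOp_iterate_add, hv1, hv2, add_zero]
    have hle : degAd L₀ ((u' * u) * (x + y)) ≤ dmax := Nat.sInf_le hv
    rcases max_cases (degAd L₀ ((u' * u) * x)) (degAd L₀ ((u' * u) * y)) with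
      ⟨hm, _⟩ | ⟨hm, _⟩
    · exact le_max_iff.mpr (Or.inl (by rw [hdmax, hm] at hle; omega))
    · exact le_max_iff.mpr (Or.inr (by rw [hdmax, hm] at hle; omega))
  have hdelta : ∀ x : A, adOp L₀ L₀ x ≠ 0 → ν (adOp L₀ L₀ x) + 1 ≤ ν x := by
    intro x hdx
    have hx : x ≠ 0 := fun h => hdx (by rw [h, adOp_zero])
    have hu : w x ∈ S := hwS x
    have hub : w x * x ∈ B := hwB x
    set u := w x with hu_def
    have huB : u ∈ B := hSB u hu
    have hune : u ≠ 0 := hSne u hu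
    have hkey : u * adOp L₀ L₀ x = adOp L₀ L₀ (u * x) - adOp L₀ L₀ u * x := by
      simp only [adOp]; noncomm_ring
    have hδuB : adOp L₀ L₀ u ∈ B := by
      show L₀ * u - u * L₀ ∈ B
      exact B.sub_mem (B.mul_mem hL₀ huB) (B.mul_mem huB hL₀)
    have hδuxB : adOp L₀ L₀ (u * x) ∈ B := by
      show L₀ * (u * x) - (u * x) * L₀ ∈ B
      exact B.sub_mem (B.mul_mem hL₀ hub) (B.mul_mem hub hL₀)
    have hux_ne : u * x ≠ 0 := mul_ne_zero hune hx
    have hudx_ne : u * adOp L₀ L₀ x ≠ 0 := mul_ne_zero hune hdx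
    have e1 := hspec x u 1 hx hu hS1 (by rw [mul_one]; exact hub)
    rw [mul_one, degAd_one] at e1
    -- ν x = deg(ux) - deg u
    have hνu : ν u = (degAd L₀ u : ℤ) := by
      have := hspec u 1 1 hune hS1 hS1 (by rw [one_mul, mul_one]; exact huB)
      rw [one_mul, mul_one, degAd_one] at this
      omega
    have hν1 : ∀ b : A, b ∈ B → b ≠ 0 → ν b = (degAd L₀ b : ℤ) := by
      intro b hbB hb
      have := hspec b 1 1 hb hS1 hS1 (by rw [one_mul, mul_one]; exact hbB)
      rw [one_mul, mul_one, degAd_one] at this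
      omega
    -- bound the two pieces
    have hbound1 : adOp L₀ L₀ (u * x) ≠ 0 →
        ν (adOp L₀ L₀ (u * x)) ≤ (degAd L₀ (u * x) : ℤ) - 1 := by
      intro h
      rw [hν1 _ hδuxB h]
      have := degAd_adOp_le h (hBne _ hub)
      omega
    have hbound2 : adOp L₀ L₀ u ≠ 0 →
        ν (adOp L₀ L₀ u * x) ≤ (degAd L₀ (u * x) : ℤ) - 1 := by
      intro h
      rw [hmul _ _ h hx, hν1 _ hδuB h]
      have := degAd_adOp_le h (hBne _ huB)
      omega
    have hmain : ν (u * adOp L₀ L₀ x) ≤ (degAd L₀ (u * x) : ℤ) - 1 := by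
      by_cases h1 : adOp L₀ L₀ (u * x) = 0
      · have h2 : adOp L₀ L₀ u ≠ 0 := by
          intro h2
          apply hudx_ne
          rw [hkey, h1, h2, zero_mul, sub_zero]
        have hne : adOp L₀ L₀ u * x ≠ 0 := mul_ne_zero h2 hx
        have : u * adOp L₀ L₀ x = -(adOp L₀ L₀ u * x) := by rw [hkey, h1, zero_sub]
        rw [this, hneg _ hne]
        exact hbound2 h2
      · by_cases h2 : adOp L₀ L₀ u = 0
        · have : u * adOp L₀ L₀ x = adOp L₀ L₀ (u * x) := by
            rw [hkey, h2, zero_mul, sub_zero]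
          rw [this]
          exact hbound1 h1
        · have hne2 : adOp L₀ L₀ u * x ≠ 0 := mul_ne_zero h2 hx
          have hrw : u * adOp L₀ L₀ x = adOp L₀ L₀ (u * x) + -(adOp L₀ L₀ u * x) := by
            rw [hkey, sub_eq_add_neg]
          have hsum_ne : adOp L₀ L₀ (u * x) + -(adOp L₀ L₀ u * x) ≠ 0 := by
            rw [← hrw]; exact hudx_ne
          have := hadd _ _ h1 (neg_ne_zero.mpr hne2) hsum_ne
          rw [hrw]
          refine le_trans this ?_
          rw [hneg _ hne2]
          exact max_le (hbound1 h1) (hbound2 h2)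
    have hsplit : ν (u * adOp L₀ L₀ x) = ν u + ν (adOp L₀ L₀ x) := hmul _ _ hune hdx
    rw [hsplit, hνu] at hmain
    omega
  exact ⟨ν, hspec, hmul, hadd, hneg, hdelta⟩

end Aux

/-- Condition (2) of Theorem 4.4: `L = L₀` or `deg(L - L₀) < 0`, expressed via some `s' ∈ S`
with `s'(L - L₀)` a nonzero element of `B` of `ad_{L₀}`-degree smaller than that of `s'`. -/
def cond2 {k A : Type*} [CommSemiring k] [Ring A] [Algebra k A]
    (B : Subalgebra k A) (S : Set A) (L₀ L : A) : Prop :=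
  L = L₀ ∨ ∃ s' ∈ S, s' * (L - L₀) ∈ B ∧ s' * (L - L₀) ≠ 0 ∧
    degAd L₀ (s' * (L - L₀)) < degAd L₀ s'

/-- A `k`-subspace of the `A`-module `M` (with `k` acting through `algebraMap k A`). -/
def isSubspace (k A : Type*) {M : Type*} [CommSemiring k] [Ring A] [Algebra k A]
    [AddCommGroup M] [Module A M] (U : Set M) : Prop :=
  (0 : M) ∈ U ∧ (∀ u ∈ U, ∀ v ∈ U, u + v ∈ U) ∧
    (∀ c : k, ∀ u ∈ U, (algebraMap k A c) • u ∈ U)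

/-- Proposition 4.8: the shift operator `S̄ = ad_{L,L₀}^[N] s` intertwines the commuting
families `L_q = ad_L^[N_q] q` and `L_{q,0} = ad_{L₀}^[N_{q,0}] q` for `q ∈ Q = {q ∈ R : q·U ⊆ U}`,
and `N_q = N_{q,0}`. -/
theorem stmt11
    {k A M : Type*} [Field k] [CharZero k] [Ring A] [IsDomain A] [Algebra k A]
    [AddCommGroup M] [Module A M]
    (B R : Subalgebra k A) (hRB : R ≤ B)
    (hRcomm : ∀ x ∈ R, ∀ y ∈ R, x * y = y * x)
    (S : Set A) (hSR : S ⊆ (R : Set A)) (hS0 : (0 : A) ∉ S) (hS1 : (1 : A) ∈ S)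
    (hSmul : ∀ s ∈ S, ∀ t ∈ S, s * t ∈ S)
    (hSunit : ∀ s ∈ S, IsUnit s)
    (hleft : ∀ a : A, ∃ s ∈ S, s * a ∈ B)
    (hright : ∀ a : A, ∃ s ∈ S, a * s ∈ B)
    (U₀ : Set M) (hU₀0 : (0 : M) ∈ U₀)
    (hU₀add : ∀ u ∈ U₀, ∀ v ∈ U₀, u + v ∈ U₀)
    (hU₀neg : ∀ u ∈ U₀, -u ∈ U₀)
    (hU₀R : ∀ r ∈ (R : Set A), ∀ u ∈ U₀, r • u ∈ U₀)
    (hB : ∀ a : A, a ∈ B ↔ ∀ u ∈ U₀, a • u ∈ U₀)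
    (L₀ : A) (hL₀ : L₀ ∈ B)
    (hnil : ∀ b ∈ B, ∃ n : ℕ, (adOp L₀ L₀)^[n] b = 0)
    (L : A) (h2 : cond2 B S L₀ L)
    (U : Set M) (hU : isSubspace k A U)
    (hLU : ∀ u ∈ U, L • u ∈ U)
    (s : A) (hs : s ∈ S)
    (hsU₀ : ∀ u ∈ U₀, s • u ∈ U) (hsU : ∀ u ∈ U, s • u ∈ U₀) :
    -- (i) the shift operator S̄ = ad_{L,L₀}^[N] s exists, is nonzero, and L·S̄ = S̄·L₀
    ({n : ℕ | (adOp L L₀)^[n + 1] s = 0}.Nonempty ∧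
     (adOp L L₀)^[sInf {n : ℕ | (adOp L L₀)^[n + 1] s = 0}] s ≠ 0 ∧
     L * (adOp L L₀)^[sInf {n : ℕ | (adOp L L₀)^[n + 1] s = 0}] s =
       (adOp L L₀)^[sInf {n : ℕ | (adOp L L₀)^[n + 1] s = 0}] s * L₀) ∧
    -- (ii) for nonzero q ∈ Q, the minimal ad-nilpotency exponents N_q, N_{q,0} exist and agree
    (∀ q : A, q ∈ R → (∀ u ∈ U, q • u ∈ U) → q ≠ 0 →
      {n : ℕ | (adOp L L)^[n + 1] q = 0}.Nonempty ∧
      {n : ℕ | (adOp L₀ L₀)^[n + 1] q = 0}.Nonempty ∧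
      sInf {n : ℕ | (adOp L L)^[n + 1] q = 0} =
        sInf {n : ℕ | (adOp L₀ L₀)^[n + 1] q = 0}) ∧
    -- (iii) the intertwining relation ad_L^[N_q](q) · S̄ = S̄ · ad_{L₀}^[N_{q,0}](q)
    (∀ q : A, q ∈ R → (∀ u ∈ U, q • u ∈ U) → q ≠ 0 →
      (adOp L L)^[sInf {n : ℕ | (adOp L L)^[n + 1] q = 0}] q *
          (adOp L L₀)^[sInf {n : ℕ | (adOp L L₀)^[n + 1] s = 0}] s =
        (adOp L L₀)^[sInf {n : ℕ | (adOp L L₀)^[n + 1] s = 0}] s *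
          (adOp L₀ L₀)^[sInf {n : ℕ | (adOp L₀ L₀)^[n + 1] q = 0}] q) ∧
    -- (iv) the operators L_q pairwise commute, and so do the L_{q,0}
    (∀ q q' : A, q ∈ R → (∀ u ∈ U, q • u ∈ U) → q ≠ 0 →
      q' ∈ R → (∀ u ∈ U, q' • u ∈ U) → q' ≠ 0 →
      ((adOp L L)^[sInf {n : ℕ | (adOp L L)^[n + 1] q = 0}] q *
          (adOp L L)^[sInf {n : ℕ | (adOp L L)^[n + 1] q' = 0}] q' =
        (adOp L L)^[sInf {n : ℕ | (adOp L L)^[n + 1] q' = 0}] q' *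
          (adOp L L)^[sInf {n : ℕ | (adOp L L)^[n + 1] q = 0}] q) ∧
      ((adOp L₀ L₀)^[sInf {n : ℕ | (adOp L₀ L₀)^[n + 1] q = 0}] q *
          (adOp L₀ L₀)^[sInf {n : ℕ | (adOp L₀ L₀)^[n + 1] q' = 0}] q' =
        (adOp L₀ L₀)^[sInf {n : ℕ | (adOp L₀ L₀)^[n + 1] q' = 0}] q' *
          (adOp L₀ L₀)^[sInf {n : ℕ | (adOp L₀ L₀)^[n + 1] q = 0}] q)) := by
  classical
  haveI : CharZero A := charZero_of_injective_algebraMap (algebraMap k A).injective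
  obtain ⟨ν, hspec, hmul, hadd, hneg, hdelta⟩ :=
    exists_nu B R hRB hRcomm S hSR hS0 hS1 hSmul hleft hright L₀ hL₀ hnil
  have hsne : s ≠ 0 := fun h => hS0 (h ▸ hs)
  have hsB : s ∈ B := hRB (hSR hs)
  have hν1 : ∀ b : A, b ∈ B → b ≠ 0 → ν b = (degAd L₀ b : ℤ) := by
    intro b hbB hb
    have h := hspec b 1 1 hb hS1 hS1 (by rw [one_mul, mul_one]; exact hbB)
    rw [one_mul, mul_one, degAd_one] at h
    omega
  have hBvan : ∀ b : A, b ∈ B → (adOp L₀ L₀)^[degAd L₀ b + 1] b = 0 := by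
    intro b hb
    obtain ⟨n, hn⟩ := hnil b hb
    have h1 : (adOp L₀ L₀)^[n + 1] b = 0 :=
      iterate_eventually (adOp_zero L₀ L₀) hn (Nat.le_succ n)
    exact Nat.sInf_mem (⟨n, h1⟩ : Set.Nonempty {m : ℕ | (adOp L₀ L₀)^[m + 1] b = 0})
  have hU' : (0 : M) ∈ U ∧ (∀ u ∈ U, ∀ v ∈ U, u + v ∈ U) ∧
      (∀ c : k, ∀ u ∈ U, (algebraMap k A c) • u ∈ U) := hU
  have hUadd := hU'.2.1
  have hUneg : ∀ v ∈ U, -v ∈ U := by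
    intro v hv
    have h := hU'.2.2 (-1 : k) v hv
    rwa [map_neg, map_one, neg_one_smul] at h
  have hUsub : ∀ a ∈ U, ∀ b ∈ U, a - b ∈ U := by
    intro a ha b hb; rw [sub_eq_add_neg]; exact hUadd a ha _ (hUneg b hb)
  have hU₀sub : ∀ a ∈ U₀, ∀ b ∈ U₀, a - b ∈ U₀ := by
    intro a ha b hb; rw [sub_eq_add_neg]; exact hU₀add a ha _ (hU₀neg b hb)
  have hL₀U₀ : ∀ u ∈ U₀, L₀ • u ∈ U₀ := (hB L₀).mp hL₀
  -- the ν-drop lemmas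
  have h2' : L = L₀ ∨ ∃ s' ∈ S, s' * (L - L₀) ∈ B ∧ s' * (L - L₀) ≠ 0 ∧
      degAd L₀ (s' * (L - L₀)) < degAd L₀ s' := h2
  have hdiffν : L - L₀ ≠ 0 → ν (L - L₀) ≤ -1 := by
    intro hne
    rcases h2' with hL2 | ⟨s', hs'S, hs'B, hs'ne, hs'deg⟩
    · exact absurd (by rw [hL2, sub_self]) hne
    · have h := hspec (L - L₀) s' 1 hne hs'S hS1 (by rw [mul_one]; exact hs'B)
      rw [mul_one, degAd_one] at h
      omega
  have hDdrop : ∀ x : A, adOp L L₀ x ≠ 0 → ν (adOp L L₀ x) + 1 ≤ ν x := by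
    intro x hdx
    have hx : x ≠ 0 := fun h => hdx (by rw [h, adOp_zero])
    have hkey : adOp L L₀ x = adOp L₀ L₀ x + (L - L₀) * x := by
      simp only [adOp]; noncomm_ring
    by_cases hd0 : L - L₀ = 0
    · have hLL : L = L₀ := sub_eq_zero.mp hd0
      rw [hLL] at hdx ⊢
      exact hdelta x hdx
    · have hb2 : ν ((L - L₀) * x) + 1 ≤ ν x := by
        rw [hmul _ _ hd0 hx]
        have := hdiffν hd0
        omega
      by_cases hδ : adOp L₀ L₀ x = 0
      · have heq : adOp L L₀ x = (L - L₀) * x := by rw [hkey, hδ, zero_add]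
        rw [heq]; exact hb2
      · have hne2 : (L - L₀) * x ≠ 0 := mul_ne_zero hd0 hx
        have hsum := hadd _ _ hδ hne2 (by rw [← hkey]; exact hdx)
        rw [← hkey] at hsum
        have b1 := hdelta x hδ
        have : ν (adOp L L₀ x) ≤ ν x - 1 :=
          le_trans hsum (max_le (by omega) (by omega))
        omega
  have hT'drop : ∀ x : A, adOp L₀ L x ≠ 0 → ν (adOp L₀ L x) + 1 ≤ ν x := by
    intro x hdx
    have hx : x ≠ 0 := fun h => hdx (by rw [h, adOp_zero])
    have hkey : adOp L₀ L x = adOp L₀ L₀ x + -(x * (L - L₀)) := by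
      simp only [adOp]; noncomm_ring
    by_cases hd0 : L - L₀ = 0
    · have hLL : L = L₀ := sub_eq_zero.mp hd0
      rw [hLL] at hdx ⊢
      exact hdelta x hdx
    · have hne2 : x * (L - L₀) ≠ 0 := mul_ne_zero hx hd0
      have hb2 : ν (-(x * (L - L₀))) + 1 ≤ ν x := by
        rw [hneg _ hne2, hmul _ _ hx hd0]
        have := hdiffν hd0
        omega
      by_cases hδ : adOp L₀ L₀ x = 0
      · have heq : adOp L₀ L x = -(x * (L - L₀)) := by rw [hkey, hδ, zero_add]
        rw [heq]; exact hb2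
      · have hsum := hadd _ _ hδ (neg_ne_zero.mpr hne2) (by rw [← hkey]; exact hdx)
        rw [← hkey] at hsum
        have b1 := hdelta x hδ
        have : ν (adOp L₀ L x) ≤ ν x - 1 :=
          le_trans hsum (max_le (by omega) (by omega))
        omega
  have hLdrop : ∀ x : A, adOp L L x ≠ 0 → ν (adOp L L x) + 1 ≤ ν x := by
    intro x hdx
    have hx : x ≠ 0 := fun h => hdx (by rw [h, adOp_zero])
    have hkey : adOp L L x = adOp L L₀ x + -(x * (L - L₀)) := by
      simp only [adOp]; noncomm_ring
    by_cases hd0 : L - L₀ = 0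
    · have hLL : L = L₀ := sub_eq_zero.mp hd0
      rw [hLL] at hdx ⊢
      exact hdelta x hdx
    · have hne2 : x * (L - L₀) ≠ 0 := mul_ne_zero hx hd0
      have hb2 : ν (-(x * (L - L₀))) + 1 ≤ ν x := by
        rw [hneg _ hne2, hmul _ _ hx hd0]
        have := hdiffν hd0
        omega
      by_cases hD : adOp L L₀ x = 0
      · have heq : adOp L L x = -(x * (L - L₀)) := by rw [hkey, hD, zero_add]
        rw [heq]; exact hb2
      · have hsum := hadd _ _ hD (neg_ne_zero.mpr hne2) (by rw [← hkey]; exact hdx)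
        rw [← hkey] at hsum
        have b1 := hDdrop x hD
        have : ν (adOp L L x) ≤ ν x - 1 :=
          le_trans hsum (max_le (by omega) (by omega))
        omega
  have hiter : ∀ (f : A → A), f 0 = 0 → (∀ y : A, f y ≠ 0 → ν (f y) + 1 ≤ ν y) →
      ∀ (n : ℕ) (x : A), f^[n] x ≠ 0 → ν (f^[n] x) + n ≤ ν x := by
    intro f hf0 hdrop n
    induction n with
    | zero => intro x h; simp
    | succ n ih =>
      intro x h
      have h1 : f^[n] x ≠ 0 := fun hz => h (by rw [Function.iterate_succ_apply', hz, hf0])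
      have h2 := hdrop (f^[n] x) (by rwa [← Function.iterate_succ_apply' f n x])
      have h3 := ih x h1
      rw [Function.iterate_succ_apply']
      push_cast
      omega
  have hengine : ∀ (f : A → A), f 0 = 0 → (∀ y : A, f y ≠ 0 → ν (f y) + 1 ≤ ν y) →
      ∀ (x : A) (Cb : ℤ), x ≠ 0 → (∀ n : ℕ, f^[n] x ≠ 0 → 0 ≤ ν (f^[n] x) + Cb) →
      {n : ℕ | f^[n + 1] x = 0}.Nonempty := by
    intro f hf0 hdrop x Cb hx hbound
    by_contra hc
    have hc' : ∀ n, f^[n + 1] x ≠ 0 := fun n h => hc ⟨n, h⟩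
    have hall : ∀ n, f^[n] x ≠ 0 := by
      intro n
      cases n with
      | zero => simpa using hx
      | succ n => exact hc' n
    obtain ⟨n, hn⟩ := exists_nat_gt (ν x + Cb)
    have h1 := hiter f hf0 hdrop n x (hall n)
    have h2 := hbound n (hall n)
    omega
  -- module-theoretic facts giving nilpotency certificates
  have hUD : ∀ (n : ℕ), ∀ u ∈ U₀, ((adOp L L₀)^[n] s) • u ∈ U := by
    intro n
    induction n with
    | zero => simpa using hsU₀
    | succ n ih =>
      intro u hu
      rw [Function.iterate_succ_apply']
      have heq : adOp L L₀ ((adOp L L₀)^[n] s) • u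
          = L • (((adOp L L₀)^[n] s) • u) - ((adOp L L₀)^[n] s) • (L₀ • u) := by
        show (L * _ - _ * L₀) • u = _
        rw [sub_smul, mul_smul, mul_smul]
      rw [heq]
      exact hUsub _ (hLU _ (ih u hu)) _ (ih _ (hL₀U₀ u hu))
  have hUD' : ∀ (n : ℕ), ∀ u ∈ U, ((adOp L₀ L)^[n] s) • u ∈ U₀ := by
    intro n
    induction n with
    | zero => simpa using hsU
    | succ n ih =>
      intro u hu
      rw [Function.iterate_succ_apply']
      have heq : adOp L₀ L ((adOp L₀ L)^[n] s) • u
          = L₀ • (((adOp L₀ L)^[n] s) • u) - ((adOp L₀ L)^[n] s) • (L • u) := by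
        show (L₀ * _ - _ * L) • u = _
        rw [sub_smul, mul_smul, mul_smul]
      rw [heq]
      exact hU₀sub _ (hL₀U₀ _ (ih u hu)) _ (ih _ (hLU u hu))
  have hzB : ∀ n : ℕ, s * (adOp L L₀)^[n] s ∈ B := fun n => (hB _).mpr (fun u hu => by
    rw [mul_smul]; exact hsU _ (hUD n u hu))
  have hz'B : ∀ n : ℕ, (adOp L₀ L)^[n] s * s ∈ B := fun n => (hB _).mpr (fun u hu => by
    rw [mul_smul]; exact hUD' n _ (hsU₀ u hu))
  -- part (i): existence
  have hiNe : {n : ℕ | (adOp L L₀)^[n + 1] s = 0}.Nonempty := by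
    refine hengine (adOp L L₀) (adOp_zero L L₀) hDdrop s (degAd L₀ s : ℤ) hsne ?_
    intro n hn
    have hm := hmul s _ hsne hn
    have h3 : (0 : ℤ) ≤ ν (s * (adOp L L₀)^[n] s) := by
      rw [hν1 _ (hzB n) (mul_ne_zero hsne hn)]; exact Int.natCast_nonneg _
    have h4 := hν1 s hsB hsne
    omega
  have hi'Ne : {n : ℕ | (adOp L₀ L)^[n + 1] s = 0}.Nonempty := by
    refine hengine (adOp L₀ L) (adOp_zero L₀ L) hT'drop s (degAd L₀ s : ℤ) hsne ?_
    intro n hn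
    have hm := hmul _ s hn hsne
    have h3 : (0 : ℤ) ≤ ν ((adOp L₀ L)^[n] s * s) := by
      rw [hν1 _ (hz'B n) (mul_ne_zero hn hsne)]; exact Int.natCast_nonneg _
    have h4 := hν1 s hsB hsne
    omega
  set N := sInf {n : ℕ | (adOp L L₀)^[n + 1] s = 0} with hN
  set N' := sInf {n : ℕ | (adOp L₀ L)^[n + 1] s = 0} with hN'
  have hSbne : (adOp L L₀)^[N] s ≠ 0 := by rw [hN]; exact sInf_iter_ne hsne
  have hDSb : (adOp L L₀)^[N + 1] s = 0 := by rw [hN]; exact Nat.sInf_mem hiNe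
  have hSb'ne : (adOp L₀ L)^[N'] s ≠ 0 := by rw [hN']; exact sInf_iter_ne hsne
  have hDSb' : (adOp L₀ L)^[N' + 1] s = 0 := by rw [hN']; exact Nat.sInf_mem hi'Ne
  set Sb := (adOp L L₀)^[N] s with hSbdef
  set Sb' := (adOp L₀ L)^[N'] s with hSb'def
  have hLSb : L * Sb = Sb * L₀ := by
    have h : adOp L L₀ Sb = 0 := by
      rw [hSbdef, ← Function.iterate_succ_apply' (adOp L L₀) N s]; exact hDSb
    have h' : L * Sb - Sb * L₀ = 0 := h
    exact sub_eq_zero.mp h'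
  have hL₀Sb' : L₀ * Sb' = Sb' * L := by
    have h : adOp L₀ L Sb' = 0 := by
      rw [hSb'def, ← Function.iterate_succ_apply' (adOp L₀ L) N' s]; exact hDSb'
    have h' : L₀ * Sb' - Sb' * L = 0 := h
    exact sub_eq_zero.mp h'
  -- conjugation identities
  have hidT : ∀ x : A, adOp L L₀ (x * Sb) = adOp L L x * Sb := by
    intro x
    show L * (x * Sb) - (x * Sb) * L₀ = (L * x - x * L) * Sb
    calc L * (x * Sb) - (x * Sb) * L₀ = L * x * Sb - x * (Sb * L₀) := by noncomm_ring
      _ = L * x * Sb - x * (L * Sb) := by rw [hLSb]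
      _ = (L * x - x * L) * Sb := by noncomm_ring
  have hidT2 : ∀ x : A, adOp L L₀ (Sb * x) = Sb * adOp L₀ L₀ x := by
    intro x
    show L * (Sb * x) - (Sb * x) * L₀ = Sb * (L₀ * x - x * L₀)
    calc L * (Sb * x) - (Sb * x) * L₀ = (L * Sb) * x - Sb * (x * L₀) := by noncomm_ring
      _ = (Sb * L₀) * x - Sb * (x * L₀) := by rw [hLSb]
      _ = Sb * (L₀ * x - x * L₀) := by noncomm_ring
  have hidf1 : ∀ x : A, adOp L L (Sb * x) = Sb * adOp L₀ L x := by
    intro x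
    show L * (Sb * x) - (Sb * x) * L = Sb * (L₀ * x - x * L)
    calc L * (Sb * x) - (Sb * x) * L = (L * Sb) * x - Sb * (x * L) := by noncomm_ring
      _ = (Sb * L₀) * x - Sb * (x * L) := by rw [hLSb]
      _ = Sb * (L₀ * x - x * L) := by noncomm_ring
  have hidf2 : ∀ x : A, adOp L L (x * Sb') = adOp L L₀ x * Sb' := by
    intro x
    show L * (x * Sb') - (x * Sb') * L = (L * x - x * L₀) * Sb'
    calc L * (x * Sb') - (x * Sb') * L = L * x * Sb' - x * (Sb' * L) := by noncomm_ring
      _ = L * x * Sb' - x * (L₀ * Sb') := by rw [hL₀Sb']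
      _ = (L * x - x * L₀) * Sb' := by noncomm_ring
  have hitT : ∀ (n : ℕ) (x : A), (adOp L L₀)^[n] (x * Sb) = (adOp L L)^[n] x * Sb := by
    intro n x
    induction n with
    | zero => simp
    | succ n ih =>
      rw [Function.iterate_succ_apply', ih, hidT, ← Function.iterate_succ_apply' (adOp L L) n x]
  have hitT2 : ∀ (n : ℕ) (x : A), (adOp L L₀)^[n] (Sb * x) = Sb * (adOp L₀ L₀)^[n] x := by
    intro n x
    induction n with
    | zero => simp
    | succ n ih =>
      rw [Function.iterate_succ_apply', ih, hidT2, ← Function.iterate_succ_apply' (adOp L₀ L₀) n x]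
  have hitf1 : ∀ (n : ℕ) (x : A), (adOp L L)^[n] (Sb * x) = Sb * (adOp L₀ L)^[n] x := by
    intro n x
    induction n with
    | zero => simp
    | succ n ih =>
      rw [Function.iterate_succ_apply', ih, hidf1, ← Function.iterate_succ_apply' (adOp L₀ L) n x]
  have hitf2 : ∀ (n : ℕ) (x : A), (adOp L L)^[n] (x * Sb') = (adOp L L₀)^[n] x * Sb' := by
    intro n x
    induction n with
    | zero => simp
    | succ n ih =>
      rw [Function.iterate_succ_apply', ih, hidf2, ← Function.iterate_succ_apply' (adOp L L₀) n x]
  have hitf3 : ∀ (n : ℕ) (x : A),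
      (adOp L L)^[n] (Sb * x * Sb') = Sb * (adOp L₀ L₀)^[n] x * Sb' := by
    intro n x
    have h1 := hitf2 n (Sb * x)
    rw [hitT2 n x] at h1
    exact h1
  have hcancelL : ∀ z : A, Sb * z = 0 ↔ z = 0 := by
    intro z
    constructor
    · intro h
      rcases mul_eq_zero.mp h with h' | h'
      · exact absurd h' hSbne
      · exact h'
    · intro h; rw [h, mul_zero]
  have hcancelR : ∀ z : A, z * Sb' = 0 ↔ z = 0 := by
    intro z
    constructor
    · intro h
      rcases mul_eq_zero.mp h with h' | h'
      · exact h'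
      · exact absurd h' hSb'ne
    · intro h; rw [h, zero_mul]
  have hcancel : ∀ z : A, Sb * z * Sb' = 0 ↔ z = 0 := by
    intro z
    rw [hcancelR, hcancelL]
  -- part (ii): existence of N_q
  have hqNe : ∀ q : A, q ∈ R → (∀ u ∈ U, q • u ∈ U) → q ≠ 0 →
      {n : ℕ | (adOp L L)^[n + 1] q = 0}.Nonempty := by
    intro q hqR hqU hq
    have hqB : q ∈ B := hRB hqR
    have hUq : ∀ (n : ℕ), ∀ u ∈ U, ((adOp L L)^[n] q) • u ∈ U := by
      intro n
      induction n with
      | zero => simpa using hqU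
      | succ n ih =>
        intro u hu
        rw [Function.iterate_succ_apply']
        have heq : adOp L L ((adOp L L)^[n] q) • u
            = L • (((adOp L L)^[n] q) • u) - ((adOp L L)^[n] q) • (L • u) := by
          show (L * _ - _ * L) • u = _
          rw [sub_smul, mul_smul, mul_smul]
        rw [heq]
        exact hUsub _ (hLU _ (ih u hu)) _ (ih _ (hLU u hu))
    have hwB : ∀ n : ℕ, s * ((adOp L L)^[n] q * s) ∈ B := fun n => (hB _).mpr fun u hu => by
      rw [mul_smul, mul_smul]; exact hsU _ (hUq n _ (hsU₀ u hu))
    refine hengine (adOp L L) (adOp_zero L L) hLdrop q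
      (2 * (degAd L₀ s : ℤ) + (degAd L₀ q : ℤ)) hq ?_
    intro n hn
    have hm1 := hmul s _ hsne (mul_ne_zero hn hsne)
    have hm2 := hmul _ s hn hsne
    have h3 : (0 : ℤ) ≤ ν (s * ((adOp L L)^[n] q * s)) := by
      rw [hν1 _ (hwB n) (mul_ne_zero hsne (mul_ne_zero hn hsne))]
      exact Int.natCast_nonneg _
    have h4 := hν1 s hsB hsne
    omega
  -- the degree-matching equation (I)
  have hI : ∀ r : A, r ≠ 0 → r ∈ B → (adOp L L)^[degAd L r + 1] r = 0 →
      N' + (degAd L r + N) = degAd L₀ s + (degAd L₀ r + degAd L₀ s) := by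
    intro r hr hrB hrvan
    have eq1 : degAd L (Sb * (s * r * s) * Sb') = degAd L₀ (s * r * s) := by
      rw [degAd_def, degAd_def]
      exact congrArg sInf (Set.ext fun n => by
        simp only [Set.mem_setOf_eq, hitf3, hcancel])
    have eq2 : degAd L (Sb * s) = N' := by
      rw [degAd_def, hN']
      exact congrArg sInf (Set.ext fun n => by
        simp only [Set.mem_setOf_eq, hitf1, hcancelL])
    have eq3 : degAd L (s * Sb') = N := by
      rw [degAd_def, hN]
      exact congrArg sInf (Set.ext fun n => by
        simp only [Set.mem_setOf_eq, hitf2, hcancelR])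
    have v1 : (adOp L L)^[degAd L (Sb * s) + 1] (Sb * s) = 0 := by
      rw [eq2, hitf1, hDSb', mul_zero]
    have v2 : (adOp L L)^[degAd L (s * Sb') + 1] (s * Sb') = 0 := by
      rw [eq3, hitf2, hDSb, zero_mul]
    have hSbs_ne : Sb * s ≠ 0 := mul_ne_zero hSbne hsne
    have hsSb'_ne : s * Sb' ≠ 0 := mul_ne_zero hsne hSb'ne
    have hm1 : degAd L (Sb * s * r) = degAd L (Sb * s) + degAd L r :=
      degAd_mul hSbs_ne hr v1 hrvan
    have v3 : (adOp L L)^[degAd L (Sb * s * r) + 1] (Sb * s * r) = 0 := by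
      rw [hm1]
      exact adOp_leibniz_vanish L v1 hrvan
    have hm2 : degAd L (Sb * s * r * (s * Sb'))
        = degAd L (Sb * s * r) + degAd L (s * Sb') :=
      degAd_mul (mul_ne_zero hSbs_ne hr) hsSb'_ne v3 v2
    have hGassoc : Sb * (s * r * s) * Sb' = Sb * s * r * (s * Sb') := by
      simp only [mul_assoc]
    have hm3 : degAd L₀ (s * r) = degAd L₀ s + degAd L₀ r :=
      degAd_mul hsne hr (hBvan s hsB) (hBvan r hrB)
    have v4 : (adOp L₀ L₀)^[degAd L₀ (s * r) + 1] (s * r) = 0 := by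
      rw [hm3]
      exact adOp_leibniz_vanish L₀ (hBvan s hsB) (hBvan r hrB)
    have hm4 : degAd L₀ (s * r * s) = degAd L₀ (s * r) + degAd L₀ s :=
      degAd_mul (mul_ne_zero hsne hr) hsne v4 (hBvan s hsB)
    rw [hGassoc, hm2, hm1, eq2, eq3] at eq1
    omega
  have hdegEq : ∀ q : A, q ∈ R → (∀ u ∈ U, q • u ∈ U) → q ≠ 0 →
      degAd L q = degAd L₀ q := by
    intro q hqR hqU hq
    have hqB : q ∈ B := hRB hqR
    have hfq := hqNe q hqR hqU hq
    have hqvan : (adOp L L)^[degAd L q + 1] q = 0 := Nat.sInf_mem hfq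
    have h1 := hI q hq hqB hqvan
    have hone : (adOp L L)^[degAd L (1 : A) + 1] (1 : A) = 0 := by
      rw [degAd_one]
      simp [adOp]
    have hB1 : (1 : A) ∈ B := B.one_mem
    have h2 := hI 1 one_ne_zero hB1 hone
    simp only [degAd_one] at h2
    omega
  -- the intertwining relation (iii)
  have hintertw : ∀ q : A, q ∈ R → (∀ u ∈ U, q • u ∈ U) → q ≠ 0 →
      (adOp L L)^[degAd L q] q * Sb = Sb * (adOp L₀ L₀)^[degAd L q] q := by
    intro q hqR hqU hq
    have hqB : q ∈ B := hRB hqR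
    have hfq := hqNe q hqR hqU hq
    have hd := hdegEq q hqR hqU hq
    have hfvan : (adOp L L)^[degAd L q + 1] q = 0 := Nat.sInf_mem hfq
    have hgvan : (adOp L₀ L₀)^[degAd L q + 1] q = 0 := by
      rw [hd]; exact hBvan q hqB
    have hqs : q * s = s * q := hRcomm q hqR s (hSR hs)
    by_cases hd0 : degAd L q = 0
    · have hfq0 : adOp L L q = 0 := by
        have h := hfvan; rw [hd0] at h; simpa using h
      have hgq0 : adOp L₀ L₀ q = 0 := by
        have h := hgvan; rw [hd0] at h; simpa using h
      have hLq : L * q = q * L := sub_eq_zero.mp (show L * q - q * L = 0 from hfq0)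
      have hL₀q : L₀ * q = q * L₀ := sub_eq_zero.mp (show L₀ * q - q * L₀ = 0 from hgq0)
      have hcomm : ∀ n : ℕ, q * (adOp L L₀)^[n] s = (adOp L L₀)^[n] s * q := by
        intro n
        induction n with
        | zero => simpa using hqs
        | succ n ih =>
          rw [Function.iterate_succ_apply']
          show q * (L * _ - _ * L₀) = (L * _ - _ * L₀) * q
          calc q * (L * (adOp L L₀)^[n] s - (adOp L L₀)^[n] s * L₀)
              = (q * L) * (adOp L L₀)^[n] s - (q * (adOp L L₀)^[n] s) * L₀ := by noncomm_ring
            _ = (L * q) * (adOp L L₀)^[n] s - ((adOp L L₀)^[n] s * q) * L₀ := by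
                rw [← hLq, ih]
            _ = L * (q * (adOp L L₀)^[n] s) - (adOp L L₀)^[n] s * (q * L₀) := by noncomm_ring
            _ = L * ((adOp L L₀)^[n] s * q) - (adOp L L₀)^[n] s * (L₀ * q) := by
                rw [ih, ← hL₀q]
            _ = (L * (adOp L L₀)^[n] s - (adOp L L₀)^[n] s * L₀) * q := by noncomm_ring
      rw [hd0]
      simpa using hcomm N
    · obtain ⟨e, he⟩ : ∃ e, degAd L q = e + 1 := ⟨degAd L q - 1, by omega⟩
      have hfvan' : (adOp L L)^[e + 1] (adOp L L q) = 0 := by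
        have h := hfvan
        rw [he, Function.iterate_succ_apply] at h
        exact h
      have hgvan' : (adOp L₀ L₀)^[e + 1] (adOp L₀ L₀ q) = 0 := by
        have h := hgvan
        rw [he, Function.iterate_succ_apply] at h
        exact h
      have hTvan : ∀ i : ℕ, i ≤ N → (adOp L L₀)^[(N - i) + 1] ((adOp L L₀)^[i] s) = 0 := by
        intro i hi
        rw [← Function.iterate_add_apply]
        have hexp : N - i + 1 + i = N + 1 := by omega
        rw [hexp]
        exact hDSb
      have hclosed : ∀ j : ℕ, q * (adOp L L₀)^[j] s - (adOp L L₀)^[j] s * q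
          = ∑ i ∈ Finset.range j, (adOp L L₀)^[j - 1 - i]
              ((adOp L L₀)^[i] s * adOp L₀ L₀ q - adOp L L q * (adOp L L₀)^[i] s) := by
        intro j
        induction j with
        | zero => simp [hqs]
        | succ j ih =>
          rw [Finset.sum_range_succ]
          have hlast : (j + 1) - 1 - j = 0 := by omega
          rw [hlast]
          have hstep : ∑ i ∈ Finset.range j, (adOp L L₀)^[(j + 1) - 1 - i]
                ((adOp L L₀)^[i] s * adOp L₀ L₀ q - adOp L L q * (adOp L L₀)^[i] s)
              = adOp L L₀ (∑ i ∈ Finset.range j, (adOp L L₀)^[j - 1 - i]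
                ((adOp L L₀)^[i] s * adOp L₀ L₀ q - adOp L L q * (adOp L L₀)^[i] s)) := by
            rw [adOp_sum]
            refine Finset.sum_congr rfl fun i hi => ?_
            rw [Finset.mem_range] at hi
            have hii : (j + 1) - 1 - i = (j - 1 - i) + 1 := by omega
            rw [hii, Function.iterate_succ_apply']
          rw [hstep, ← ih, Function.iterate_succ_apply']
          simp only [Function.iterate_zero_apply]
          simp only [adOp]
          noncomm_ring
      have happ := congrArg ((adOp L L₀)^[e + 1]) (hclosed N)
      rw [adOp_iterate_sub, hitT (e + 1) q, hitT2 (e + 1) q, adOp_iterate_sum] at happ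
      have hterm : ∀ i ∈ Finset.range N, (adOp L L₀)^[e + 1] ((adOp L L₀)^[N - 1 - i]
            ((adOp L L₀)^[i] s * adOp L₀ L₀ q - adOp L L q * (adOp L L₀)^[i] s))
          = ((N - i + e).choose e) •
            (Sb * (adOp L₀ L₀)^[e + 1] q - (adOp L L)^[e + 1] q * Sb) := by
        intro i hi
        rw [Finset.mem_range] at hi
        rw [← Function.iterate_add_apply]
        have hexp : e + 1 + (N - 1 - i) = (N - i) + e := by omega
        rw [hexp, adOp_iterate_sub]
        have hA := adOp_leibniz_top' L L₀ L₀ (hTvan i (by omega)) hgvan'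
        have hB' := adOp_leibniz_top' L L L₀ hfvan' (hTvan i (by omega))
        have hc3 : e + (N - i) = N - i + e := by omega
        rw [hc3] at hB'
        rw [hA, hB']
        have hTi : (adOp L L₀)^[N - i] ((adOp L L₀)^[i] s) = Sb := by
          rw [← Function.iterate_add_apply]
          have hni : N - i + i = N := by omega
          rw [hni, hSbdef]
        have hg2 : (adOp L₀ L₀)^[e] (adOp L₀ L₀ q) = (adOp L₀ L₀)^[e + 1] q :=
          (Function.iterate_succ_apply (adOp L₀ L₀) e q).symm
        have hf2 : (adOp L L)^[e] (adOp L L q) = (adOp L L)^[e + 1] q :=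
          (Function.iterate_succ_apply (adOp L L) e q).symm
        rw [hTi, hg2, hf2]
        have hc1 : (N - i + e).choose (N - i) = (N - i + e).choose e := by
          have h := Nat.choose_symm (Nat.le_add_right (N - i) e)
          have h2 : N - i + e - (N - i) = e := by omega
          rw [h2] at h
          exact h.symm
        rw [hc1, ← smul_sub]
      rw [Finset.sum_congr rfl hterm, ← Finset.sum_smul] at happ
      have hzero : ((∑ i ∈ Finset.range N, (N - i + e).choose e) + 1) •
          (Sb * (adOp L₀ L₀)^[e + 1] q - (adOp L L)^[e + 1] q * Sb) = 0 := by
        rw [succ_nsmul, ← happ]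
        abel
      have hXzero : Sb * (adOp L₀ L₀)^[e + 1] q - (adOp L L)^[e + 1] q * Sb = 0 := by
        refine nsmul_cancel (c := (∑ i ∈ Finset.range N, (N - i + e).choose e) + 1)
          (Nat.succ_ne_zero _) ?_
        rw [hzero, smul_zero]
      rw [he]
      exact (sub_eq_zero.mp hXzero).symm
  -- commuting families (iv)
  have hcommute : ∀ (a q q' : A), (adOp a a)^[degAd a q + 1] q = 0 →
      (adOp a a)^[degAd a q' + 1] q' = 0 → q * q' = q' * q →
      (adOp a a)^[degAd a q] q * (adOp a a)^[degAd a q'] q'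
        = (adOp a a)^[degAd a q'] q' * (adOp a a)^[degAd a q] q := by
    intro a q q' hq hq' hqq
    have h1 := adOp_leibniz_top a hq hq'
    have h2 := adOp_leibniz_top a hq' hq
    rw [hqq] at h1
    rw [Nat.add_comm (degAd a q') (degAd a q)] at h2
    have h3 := h1.symm.trans h2
    have hch : (degAd a q + degAd a q').choose (degAd a q')
        = (degAd a q + degAd a q').choose (degAd a q) := by
      have h := Nat.choose_symm (Nat.le_add_left (degAd a q') (degAd a q))
      have h2' : degAd a q + degAd a q' - degAd a q' = degAd a q := by omega
      rw [h2'] at h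
      exact h.symm
    rw [hch] at h3
    exact nsmul_cancel (Nat.choose_pos (Nat.le_add_right _ _)).ne' h3
  -- assemble
  refine ⟨⟨hiNe, hSbne, hLSb⟩, ?_, ?_, ?_⟩
  · intro q hqR hqU hq
    refine ⟨hqNe q hqR hqU hq, ⟨degAd L₀ q, hBvan q (hRB hqR)⟩, ?_⟩
    exact hdegEq q hqR hqU hq
  · intro q hqR hqU hq
    have h := hintertw q hqR hqU hq
    have hd := hdegEq q hqR hqU hq
    show (adOp L L)^[degAd L q] q * Sb = Sb * (adOp L₀ L₀)^[degAd L₀ q] q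
    rw [← hd]
    exact h
  · intro q q' hqR hqU hq hq'R hq'U hq'
    have hqv : (adOp L L)^[degAd L q + 1] q = 0 := Nat.sInf_mem (hqNe q hqR hqU hq)
    have hq'v : (adOp L L)^[degAd L q' + 1] q' = 0 := Nat.sInf_mem (hqNe q' hq'R hq'U hq')
    have hcomm := hRcomm q hqR q' hq'R
    constructor
    · exact hcommute L q q' hqv hq'v hcomm
    · exact hcommute L₀ q q' (hBvan q (hRB hqR)) (hBvan q' (hRB hq'R)) hcomm
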